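/- Let G be a connected graph on n vertices and α ∈ [0,1). Then λ₁(A_α(l(G))) < 2 if and only if G is the path P_n. -/

import Mathlib

open Matrix SimpleGraph Finset

noncomputable def Aalpha {V : Type*} [Fintype V] (α : ℝ) (G : SimpleGraph V) : Matrix V V ℝ :=
  letI := Classical.decEq V
  letI : DecidableRel G.Adj := Classical.decRel _
  α • Matrix.diagonal (fun v => (G.degree v : ℝ)) + (1 - α) • G.adjMatrix ℝ

noncomputable instance edgeSetFintype {V : Type*} [Fintype V] (G : SimpleGraph V) :
    Fintype G.edgeSet :=
  Set.Finite.fintype (Set.toFinite _)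

open scoped Classical in
noncomputable def incB {V : Type*} [Fintype V] (G : SimpleGraph V) : Matrix V G.edgeSet ℝ :=
  fun v e => if v ∈ (e : Sym2 V) then 1 else 0

noncomputable def edgeDegSum {V : Type*} [Fintype V] (G : SimpleGraph V) (e : Sym2 V) : ℝ :=
  letI := Classical.decEq V
  letI : DecidableRel G.Adj := Classical.decRel _
  Sym2.lift ⟨fun a b => (G.degree a : ℝ) + (G.degree b : ℝ), fun a b => by ring⟩ e

section Spectral
variable {ι : Type*} [Fintype ι] [DecidableEq ι] {M : Matrix ι ι ℝ}



lemma dot_self_pos {x : ι → ℝ} (hx : x ≠ 0) : 0 < x ⬝ᵥ x := by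
  have h0 : 0 ≤ x ⬝ᵥ x := Finset.sum_nonneg fun i _ => mul_self_nonneg _
  rcases h0.lt_or_eq with h | h
  · exact h
  · exact absurd ((dotProduct_self_eq_zero).mp h.symm) hx

lemma eig_lt_of_quad (hM : M.IsHermitian) (c : ℝ)
    (h : ∀ x : ι → ℝ, x ≠ 0 → x ⬝ᵥ (M *ᵥ x) < c * (x ⬝ᵥ x)) (i : ι) :
    hM.eigenvalues i < c := by
  set v : ι → ℝ := ⇑(hM.eigenvectorBasis i) with hv
  have hvne : v ≠ 0 := by
    intro h0
    have := hM.eigenvectorBasis.orthonormal.1 i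
    rw [EuclideanSpace.norm_eq] at this
    simp only [hv] at h0
    rw [show (hM.eigenvectorBasis i : ι → ℝ) = 0 from h0] at this
    simp at this
  have hmv : M *ᵥ v = hM.eigenvalues i • v := hM.mulVec_eigenvectorBasis i
  have hq := h v hvne
  rw [hmv, dotProduct_smul, smul_eq_mul] at hq
  have hpos := dot_self_pos hvne
  exact lt_of_mul_lt_mul_right (by linarith) hpos.le

lemma quad_le_iSup (hM : M.IsHermitian) [Nonempty ι] (x : ι → ℝ) :
    x ⬝ᵥ (M *ᵥ x) ≤ (⨆ i, hM.eigenvalues i) * (x ⬝ᵥ x) := by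
  set U : Matrix ι ι ℝ := (hM.eigenvectorUnitary : Matrix ι ι ℝ) with hU
  have hUU : U * star U = 1 := (Matrix.mem_unitaryGroup_iff).mp hM.eigenvectorUnitary.2
  set y : ι → ℝ := (star U) *ᵥ x with hy
  have hst : star U = Uᵀ := by
    rw [Matrix.star_eq_conjTranspose]
    ext i j
    simp [Matrix.conjTranspose_apply]
  have hspec : M = U * Matrix.diagonal (RCLike.ofReal ∘ hM.eigenvalues) * star U :=
    hM.spectral_theorem
  have hdiag : Matrix.diagonal (RCLike.ofReal ∘ hM.eigenvalues) = Matrix.diagonal hM.eigenvalues := by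
    rw [RCLike.ofReal_real_eq_id]; rfl
  rw [hdiag] at hspec
  have key : x ⬝ᵥ (M *ᵥ x) = y ⬝ᵥ (Matrix.diagonal (hM.eigenvalues) *ᵥ y) := by
    conv_lhs => rw [hspec]
    rw [← Matrix.mulVec_mulVec, ← Matrix.mulVec_mulVec,
      Matrix.dotProduct_mulVec x U, ← Matrix.mulVec_transpose, ← hst]
  have hyy : y ⬝ᵥ y = x ⬝ᵥ x := by
    conv_lhs => rw [hy, hst, Matrix.dotProduct_mulVec, Matrix.vecMul_transpose,
      Matrix.mulVec_mulVec, ← hst, hUU, Matrix.one_mulVec]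
  have hbdd : BddAbove (Set.range hM.eigenvalues) := (Set.finite_range _).bddAbove
  calc x ⬝ᵥ (M *ᵥ x) = ∑ i, hM.eigenvalues i * (y i)^2 := by
        rw [key]
        simp only [dotProduct, Matrix.mulVec_diagonal]
        exact Finset.sum_congr rfl fun i _ => by ring
    _ ≤ ∑ i, (⨆ j, hM.eigenvalues j) * (y i)^2 := by
        apply Finset.sum_le_sum
        intro i _
        exact mul_le_mul_of_nonneg_right (le_ciSup hbdd i) (sq_nonneg _)
    _ = (⨆ j, hM.eigenvalues j) * (y ⬝ᵥ y) := by
        rw [← Finset.mul_sum]; congr 1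
        simp only [dotProduct, sq]
    _ = _ := by rw [hyy]

end Spectral

lemma Aalpha_eq {ι : Type*} [Fintype ι] [DecidableEq ι] (α : ℝ) (H : SimpleGraph ι)
    [DecidableRel H.Adj] :
    Aalpha α H = α • Matrix.diagonal (fun v => (H.degree v : ℝ)) + (1 - α) • H.adjMatrix ℝ := by
  unfold Aalpha
  congr!

-- quadratic form expansion
lemma quad_expand {ι : Type*} [Fintype ι] [DecidableEq ι] (α : ℝ) (H : SimpleGraph ι)
    [DecidableRel H.Adj] (x : ι → ℝ) :
    x ⬝ᵥ (Aalpha α H *ᵥ x) =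
      α * (∑ i, (H.degree i : ℝ) * x i ^ 2)
      + (1 - α) * (∑ i, ∑ j ∈ H.neighborFinset i, x i * x j) := by
  rw [Aalpha_eq]
  rw [Matrix.add_mulVec, dotProduct_add, Matrix.smul_mulVec,
    Matrix.smul_mulVec, dotProduct_smul, dotProduct_smul]
  congr 1
  · rw [smul_eq_mul]; congr 1
    simp only [dotProduct, Matrix.mulVec_diagonal]
    exact Finset.sum_congr rfl fun i _ => by ring
  · rw [smul_eq_mul]; congr 1
    simp only [dotProduct, SimpleGraph.adjMatrix_mulVec_apply, Finset.mul_sum]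

lemma nbr_sum_swap {ι : Type*} [Fintype ι] [DecidableEq ι] (H : SimpleGraph ι)
    [DecidableRel H.Adj] (g : ι → ι → ℝ) :
    ∑ i, ∑ j ∈ H.neighborFinset i, g i j = ∑ i, ∑ j ∈ H.neighborFinset i, g j i := by
  have h : ∀ (g : ι → ι → ℝ), ∑ i, ∑ j ∈ H.neighborFinset i, g i j
      = ∑ i, ∑ j, if H.Adj i j then g i j else 0 := by
    intro g
    refine Finset.sum_congr rfl fun i _ => ?_
    rw [SimpleGraph.neighborFinset_eq_filter, Finset.sum_filter]
  rw [h, h, Finset.sum_comm]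
  refine Finset.sum_congr rfl fun i _ => Finset.sum_congr rfl fun j _ => ?_
  exact if_congr (SimpleGraph.adj_comm H j i) rfl rfl

lemma S3_eq {ι : Type*} [Fintype ι] [DecidableEq ι] (H : SimpleGraph ι)
    [DecidableRel H.Adj] (x : ι → ℝ) :
    ∑ i, ∑ j ∈ H.neighborFinset i, (x i - x j)^2 =
      2 * (∑ i, (H.degree i : ℝ) * x i ^ 2)
      - 2 * (∑ i, ∑ j ∈ H.neighborFinset i, x i * x j) := by
  have e1 : ∀ i : ι, ∑ j ∈ H.neighborFinset i, (x i - x j)^2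
      = (H.degree i : ℝ) * x i ^ 2 + (∑ j ∈ H.neighborFinset i, x j ^ 2)
        - 2 * ∑ j ∈ H.neighborFinset i, x i * x j := by
    intro i
    have expand : ∑ j ∈ H.neighborFinset i, (x i - x j)^2
        = ∑ j ∈ H.neighborFinset i, (x i^2 + x j^2 - 2*(x i * x j)) :=
      Finset.sum_congr rfl fun j _ => by ring
    rw [expand, Finset.sum_sub_distrib, Finset.sum_add_distrib, Finset.sum_const,
      nsmul_eq_mul, ← Finset.mul_sum, SimpleGraph.degree]
  have e2 : ∑ i, ∑ j ∈ H.neighborFinset i, x j ^ 2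
      = ∑ i, (H.degree i : ℝ) * x i ^ 2 := by
    rw [nbr_sum_swap]
    refine Finset.sum_congr rfl fun i _ => ?_
    rw [Finset.sum_const, SimpleGraph.degree, nsmul_eq_mul]
  calc ∑ i, ∑ j ∈ H.neighborFinset i, (x i - x j)^2
      = ∑ i, ((H.degree i : ℝ) * x i ^ 2 + (∑ j ∈ H.neighborFinset i, x j ^ 2)
        - 2 * ∑ j ∈ H.neighborFinset i, x i * x j) := Finset.sum_congr rfl fun i _ => e1 i
    _ = _ := by
        rw [Finset.sum_sub_distrib, Finset.sum_add_distrib, e2, ← Finset.mul_sum]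
        ring

lemma quad_identity {ι : Type*} [Fintype ι] [DecidableEq ι] (α : ℝ) (H : SimpleGraph ι)
    [DecidableRel H.Adj] (x : ι → ℝ) :
    2 * (x ⬝ᵥ x) - x ⬝ᵥ (Aalpha α H *ᵥ x) =
      (∑ i, (2 - (H.degree i : ℝ)) * x i ^ 2)
      + ((1 - α)/2) * ∑ i, ∑ j ∈ H.neighborFinset i, (x i - x j)^2 := by
  have h1 := quad_expand α H x
  have h2 := S3_eq H x
  have h3 : x ⬝ᵥ x = ∑ i, x i ^ 2 := by
    simp only [dotProduct, sq]
  have h4 : (∑ i, (2 - (H.degree i : ℝ)) * x i ^ 2)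
      = 2 * (∑ i, x i ^ 2) - ∑ i, (H.degree i : ℝ) * x i ^ 2 := by
    rw [Finset.mul_sum, ← Finset.sum_sub_distrib]
    exact Finset.sum_congr rfl fun i _ => by ring
  linear_combination 2*h3 - h1 - h4 - ((1-α)/2)*h2

lemma deg_le_two_of_idx {ι : Type*} [Fintype ι] [DecidableEq ι] (H : SimpleGraph ι)
    [DecidableRel H.Adj] (idx : ι → ℕ) (hinj : Function.Injective idx)
    (hadj : ∀ i j, H.Adj i j → idx j = idx i + 1 ∨ idx i = idx j + 1) (i : ι) :
    H.degree i ≤ 2 := by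
  rw [SimpleGraph.degree]
  calc (H.neighborFinset i).card
      ≤ ({idx i + 1, idx i - 1} : Finset ℕ).card := by
        apply Finset.card_le_card_of_injOn idx
        · intro j hj
          rw [Finset.mem_coe, SimpleGraph.mem_neighborFinset] at hj
          rcases hadj i j hj with h | h
          · simp [h]
          · simp only [Finset.mem_coe, Finset.mem_insert, Finset.mem_singleton]
            right; omega
        · exact fun a _ b _ h => hinj h
    _ ≤ 2 := Finset.card_insert_le _ _ |>.trans (by simp)

lemma quad_strict {ι : Type*} [Fintype ι] [DecidableEq ι] {α : ℝ} (hα : α ∈ Set.Ico (0:ℝ) 1)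
    (H : SimpleGraph ι) [DecidableRel H.Adj]
    (idx : ι → ℕ) (hinj : Function.Injective idx)
    (hadj : ∀ i j, H.Adj i j → idx j = idx i + 1 ∨ idx i = idx j + 1)
    (x : ι → ℝ) (hx : x ≠ 0) :
    x ⬝ᵥ (Aalpha α H *ᵥ x) < 2 * (x ⬝ᵥ x) := by
  have hdeg : ∀ i, H.degree i ≤ 2 := deg_le_two_of_idx H idx hinj hadj
  have hid := quad_identity α H x
  have hAnn : ∀ i ∈ Finset.univ, (0:ℝ) ≤ (2 - (H.degree i : ℝ)) * x i ^ 2 := by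
    intro i _
    apply mul_nonneg _ (sq_nonneg _)
    have := hdeg i
    have : ((H.degree i : ℝ)) ≤ 2 := by exact_mod_cast this
    linarith
  have hBnn : ∀ i ∈ Finset.univ, (0:ℝ) ≤ ∑ j ∈ H.neighborFinset i, (x i - x j)^2 :=
    fun i _ => Finset.sum_nonneg fun j _ => sq_nonneg _
  have hA : (0:ℝ) ≤ ∑ i, (2 - (H.degree i : ℝ)) * x i ^ 2 := Finset.sum_nonneg hAnn
  have hB : (0:ℝ) ≤ ∑ i, ∑ j ∈ H.neighborFinset i, (x i - x j)^2 :=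
    Finset.sum_nonneg hBnn
  have hc : (0:ℝ) < (1 - α)/2 := by
    have := hα.2; linarith
  -- strictness
  rcases lt_or_eq_of_le (add_nonneg hA (mul_nonneg hc.le hB)) with hpos | heq
  · linarith
  -- equality case: derive contradiction
  exfalso
  have hA0 : ∑ i, (2 - (H.degree i : ℝ)) * x i ^ 2 = 0 := by nlinarith [mul_nonneg hc.le hB]
  have hB0 : ∑ i, ∑ j ∈ H.neighborFinset i, (x i - x j)^2 = 0 := by
    rcases hB.lt_or_eq with h | h
    · nlinarith
    · exact h.symm
  have hAterm := (Finset.sum_eq_zero_iff_of_nonneg hAnn).mp hA0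
  have hBterm : ∀ i j, H.Adj i j → x i = x j := by
    intro i j hij
    have h1 := (Finset.sum_eq_zero_iff_of_nonneg hBnn).mp hB0 i (Finset.mem_univ i)
    have h2 := (Finset.sum_eq_zero_iff_of_nonneg (fun j _ => sq_nonneg (x i - x j))).mp h1 j
      (by rwa [SimpleGraph.mem_neighborFinset])
    have := sq_eq_zero_iff.mp h2
    linarith
  -- pick maximal idx with x ≠ 0
  have hSne : (Finset.univ.filter (fun i => x i ≠ 0)).Nonempty := by
    rcases Function.ne_iff.mp hx with ⟨i, hi⟩
    refine ⟨i, Finset.mem_filter.mpr ⟨Finset.mem_univ i, by simpa using hi⟩⟩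
  obtain ⟨e, heS, hemax⟩ := Finset.exists_max_image _ idx hSne
  have hxe : x e ≠ 0 := (Finset.mem_filter.mp heS).2
  by_cases hnext : ∃ f, H.Adj e f ∧ idx f = idx e + 1
  · obtain ⟨f, hef, hfidx⟩ := hnext
    have hxf : x f = x e := (hBterm e f hef).symm
    have hfS : f ∈ Finset.univ.filter (fun i => x i ≠ 0) := by
      simp [hxf, hxe]
    have := hemax f hfS
    omega
  · -- all neighbors have idx f + 1 = idx e, so at most one neighbor
    push_neg at hnext
    have hcard : H.degree e ≤ 1 := by
      rw [SimpleGraph.degree]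
      apply Finset.card_le_one.mpr
      intro a ha b hb
      rw [SimpleGraph.mem_neighborFinset] at ha hb
      have ha' : idx e = idx a + 1 := by
        rcases hadj e a ha with h | h
        · exact absurd h (hnext a ha)
        · exact h
      have hb' : idx e = idx b + 1 := by
        rcases hadj e b hb with h | h
        · exact absurd h (hnext b hb)
        · exact h
      exact hinj (by omega)
    have := hAterm e (Finset.mem_univ e)
    have hdege : ((H.degree e : ℝ)) ≤ 1 := by exact_mod_cast hcard
    have : x e ^ 2 = 0 := by
      rcases mul_eq_zero.mp this with h | h
      · linarith
      · exact h
    exact hxe (pow_eq_zero_iff (by norm_num) |>.mp this)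

lemma quad_ge {ι : Type*} [Fintype ι] [DecidableEq ι] {α : ℝ} (hα : α ∈ Set.Ico (0:ℝ) 1)
    (H : SimpleGraph ι) [DecidableRel H.Adj] (S : Finset ι) (hSne : S.Nonempty)
    (hS : ∀ e ∈ S, ∃ f1, f1 ∈ S ∧ ∃ f2, f2 ∈ S ∧ f1 ≠ f2 ∧ H.Adj e f1 ∧ H.Adj e f2) :
    ∃ x : ι → ℝ, x ≠ 0 ∧ 2 * (x ⬝ᵥ x) ≤ x ⬝ᵥ (Aalpha α H *ᵥ x) := by
  classical
  have hS' : ∀ e ∈ S, 2 ≤ ((H.neighborFinset e) ∩ S).card := by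
    intro e he
    obtain ⟨f1, hf1S, f2, hf2S, hne, h1, h2⟩ := hS e he
    exact Finset.one_lt_card.mpr ⟨f1, Finset.mem_inter.mpr
      ⟨(H.mem_neighborFinset e f1).mpr h1, hf1S⟩, f2, Finset.mem_inter.mpr
      ⟨(H.mem_neighborFinset e f2).mpr h2, hf2S⟩, hne⟩
  set x : ι → ℝ := fun i => if i ∈ S then (1:ℝ) else 0 with hxdef
  have hxsq : ∀ i, x i * x i = x i := by
    intro i; simp only [hxdef]; split_ifs <;> ring
  have hxx : x ⬝ᵥ x = (S.card : ℝ) := by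
    simp only [dotProduct]
    rw [Finset.sum_congr rfl fun i _ => hxsq i]
    simp [hxdef, Finset.sum_ite_mem]
  refine ⟨x, ?_, ?_⟩
  · obtain ⟨e, he⟩ := hSne
    intro h0
    have : x e = 0 := by rw [h0]; rfl
    simp [hxdef, he] at this
  · rw [quad_expand, hxx]
    have hT1 : 2 * (S.card : ℝ) ≤ ∑ i, (H.degree i : ℝ) * x i ^ 2 := by
      have : ∀ i, (H.degree i : ℝ) * x i ^ 2 = if i ∈ S then (H.degree i : ℝ) else 0 := by
        intro i; simp only [hxdef]; split_ifs <;> ring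
      rw [Finset.sum_congr rfl fun i _ => this i, Finset.sum_ite_mem, Finset.univ_inter]
      calc 2 * (S.card : ℝ) = ∑ _i ∈ S, (2:ℝ) := by rw [Finset.sum_const, nsmul_eq_mul]; ring
        _ ≤ ∑ i ∈ S, (H.degree i : ℝ) := by
            apply Finset.sum_le_sum
            intro i hi
            have h1 : 2 ≤ H.degree i := le_trans (hS' i hi)
              (Finset.card_le_card Finset.inter_subset_left)
            exact_mod_cast h1
    have hT2 : 2 * (S.card : ℝ) ≤ ∑ i, ∑ j ∈ H.neighborFinset i, x i * x j := by
      have : ∀ i, ∑ j ∈ H.neighborFinset i, x i * x j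
          = if i ∈ S then (((H.neighborFinset i) ∩ S).card : ℝ) else 0 := by
        intro i
        split_ifs with hi
        · have : ∀ j ∈ H.neighborFinset i, x i * x j = if j ∈ S then (1:ℝ) else 0 := by
            intro j _; simp only [hxdef, if_pos hi, one_mul]
          rw [Finset.sum_congr rfl this, Finset.sum_ite_mem]
          simp
        · apply Finset.sum_eq_zero
          intro j _; simp only [hxdef, if_neg hi, zero_mul]
      rw [Finset.sum_congr rfl fun i _ => this i, Finset.sum_ite_mem, Finset.univ_inter]
      calc 2 * (S.card : ℝ) = ∑ _i ∈ S, (2:ℝ) := by rw [Finset.sum_const, nsmul_eq_mul]; ring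
        _ ≤ _ := by
            apply Finset.sum_le_sum
            intro i hi
            exact_mod_cast hS' i hi
    have h0 : (0:ℝ) ≤ α := hα.1
    have h1 : (0:ℝ) ≤ 1 - α := by have := hα.2; linarith
    nlinarith


section Idx
variable {V : Type*} [Fintype V] {G : SimpleGraph V} {n : ℕ}



noncomputable def eidx (φ : G ≃g SimpleGraph.pathGraph n) (e : G.edgeSet) : ℕ :=
  Sym2.lift ⟨fun a b => min (φ a).val (φ b).val, fun a b => min_comm _ _⟩ (e : Sym2 V)

lemma eidx_spec (φ : G ≃g SimpleGraph.pathGraph n) (e : G.edgeSet) :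
    ∃ a b : V, (e : Sym2 V) = s(a, b) ∧ (φ b).val = (φ a).val + 1 ∧ eidx φ e = (φ a).val := by
  obtain ⟨⟨a, b⟩, h⟩ := Quot.exists_rep (e : Sym2 V)
  have hab : (e : Sym2 V) = s(a, b) := h.symm
  have hadj : G.Adj a b := (SimpleGraph.mem_edgeSet G).mp (hab ▸ e.prop)
  have hpadj : (SimpleGraph.pathGraph n).Adj (φ a) (φ b) := φ.map_adj_iff.mpr hadj
  rw [SimpleGraph.pathGraph_adj] at hpadj
  rcases hpadj with hp | hp
  · exact ⟨a, b, hab, hp.symm, by rw [eidx, hab, Sym2.lift_mk]; simp; omega⟩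
  · exact ⟨b, a, by rw [hab, Sym2.eq_swap], hp.symm,
      by rw [eidx, hab, Sym2.lift_mk]; simp; omega⟩

lemma eidx_injective (φ : G ≃g SimpleGraph.pathGraph n) : Function.Injective (eidx φ) := by
  intro e f hef
  obtain ⟨a, b, he, hab, hia⟩ := eidx_spec φ e
  obtain ⟨c, d, hf, hcd, hic⟩ := eidx_spec φ f
  have h1 : (φ a : Fin n) = φ c := Fin.val_injective (by omega)
  have h2 : (φ b : Fin n) = φ d := Fin.val_injective (by omega)
  have hac : a = c := φ.injective h1
  have hbd : b = d := φ.injective h2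
  apply Subtype.ext
  rw [he, hf, hac, hbd]

lemma eidx_adj (φ : G ≃g SimpleGraph.pathGraph n) (e f : G.edgeSet)
    (h : G.lineGraph.Adj e f) :
    eidx φ f = eidx φ e + 1 ∨ eidx φ e = eidx φ f + 1 := by
  obtain ⟨hne, v, hve, hvf⟩ := SimpleGraph.lineGraph_adj_iff_exists.mp h
  obtain ⟨a, b, he, hab, hia⟩ := eidx_spec φ e
  obtain ⟨c, d, hf, hcd, hic⟩ := eidx_spec φ f
  rw [he, Sym2.mem_iff] at hve
  rw [hf, Sym2.mem_iff] at hvf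
  have hinj : ∀ x y : V, (φ x).val = (φ y).val → x = y := by
    intro x y hxy
    exact φ.injective (Fin.val_injective hxy)
  rcases hve with rfl | rfl <;> rcases hvf with h2 | h2 <;> subst h2
  · -- v = a = c
    exfalso
    have : b = d := hinj b d (by omega)
    exact hne (Subtype.ext (by rw [he, hf, this]))
  · -- v = a = d
    right; omega
  · -- v = b = c
    left; omega
  · -- v = b = d
    exfalso
    have : a = c := hinj a c (by omega)
    exact hne (Subtype.ext (by rw [he, hf, this]))

end Idx

section Cases
variable {V : Type*} [Fintype V] [DecidableEq V] {G : SimpleGraph V} [DecidableRel G.Adj]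



def SProp (G : SimpleGraph V) (S : Finset G.edgeSet) : Prop :=
  ∀ e ∈ S, ∃ f1, f1 ∈ S ∧ ∃ f2, f2 ∈ S ∧ f1 ≠ f2 ∧ G.lineGraph.Adj e f1 ∧ G.lineGraph.Adj e f2

lemma line_adj {e f : G.edgeSet} (hne : e ≠ f) {v : V} (hv1 : v ∈ (e : Sym2 V))
    (hv2 : v ∈ (f : Sym2 V)) : G.lineGraph.Adj e f :=
  SimpleGraph.lineGraph_adj_iff_exists.mpr ⟨hne, v, hv1, hv2⟩

lemma caseA (v : V) (h : 3 ≤ G.degree v) :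
    ∃ S : Finset G.edgeSet, S.Nonempty ∧ SProp G S := by
  obtain ⟨a, b, c, ha, hb, hc, hab, hac, hbc⟩ :=
    Finset.two_lt_card_iff.mp (by rw [SimpleGraph.card_neighborFinset_eq_degree]; omega : 2 < (G.neighborFinset v).card)
  rw [SimpleGraph.mem_neighborFinset] at ha hb hc
  let e1 : G.edgeSet := ⟨s(v,a), ha⟩
  let e2 : G.edgeSet := ⟨s(v,b), hb⟩
  let e3 : G.edgeSet := ⟨s(v,c), hc⟩
  have h12 : e1 ≠ e2 := fun h => hab (Sym2.congr_right.mp (Subtype.ext_iff.mp h))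
  have h13 : e1 ≠ e3 := fun h => hac (Sym2.congr_right.mp (Subtype.ext_iff.mp h))
  have h23 : e2 ≠ e3 := fun h => hbc (Sym2.congr_right.mp (Subtype.ext_iff.mp h))
  have hv1 : v ∈ (e1 : Sym2 V) := Sym2.mem_mk_left _ _
  have hv2 : v ∈ (e2 : Sym2 V) := Sym2.mem_mk_left _ _
  have hv3 : v ∈ (e3 : Sym2 V) := Sym2.mem_mk_left _ _
  refine ⟨{e1, e2, e3}, ⟨e1, by simp⟩, ?_⟩
  intro e he
  simp only [Finset.mem_insert, Finset.mem_singleton] at he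
  rcases he with rfl | rfl | rfl
  · exact ⟨e2, by simp, e3, by simp, h23, line_adj h12 hv1 hv2, line_adj h13 hv1 hv3⟩
  · exact ⟨e1, by simp, e3, by simp, h13, line_adj h12.symm hv2 hv1, line_adj h23 hv2 hv3⟩
  · exact ⟨e1, by simp, e2, by simp, h12, line_adj h13.symm hv3 hv1, line_adj h23.symm hv3 hv2⟩

lemma caseB (hc : G.Connected) (h2 : ∀ v : V, 2 ≤ G.degree v) :
    ∃ S : Finset G.edgeSet, S.Nonempty ∧ SProp G S := by
  refine ⟨Finset.univ, ?_, ?_⟩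
  · have ⟨v⟩ := hc.nonempty
    obtain ⟨w, hw⟩ := Finset.card_pos.mp (by rw [SimpleGraph.card_neighborFinset_eq_degree]; have := h2 v; omega : 0 < (G.neighborFinset v).card)
    rw [SimpleGraph.mem_neighborFinset] at hw
    exact ⟨⟨s(v,w), hw⟩, Finset.mem_univ _⟩
  · intro e _
    obtain ⟨⟨a, b⟩, hab⟩ := Quot.exists_rep (e : Sym2 V)
    have he : (e : Sym2 V) = s(a, b) := hab.symm
    have hadj : G.Adj a b := (SimpleGraph.mem_edgeSet G).mp (he ▸ e.prop)
    obtain ⟨a', ha', ha'b⟩ := Finset.exists_mem_ne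
      (by rw [SimpleGraph.card_neighborFinset_eq_degree]; have := h2 a; omega : 1 < (G.neighborFinset a).card) b
    obtain ⟨b', hb', hb'a⟩ := Finset.exists_mem_ne
      (by rw [SimpleGraph.card_neighborFinset_eq_degree]; have := h2 b; omega : 1 < (G.neighborFinset b).card) a
    rw [SimpleGraph.mem_neighborFinset] at ha' hb'
    let f1 : G.edgeSet := ⟨s(a,a'), ha'⟩
    let f2 : G.edgeSet := ⟨s(b,b'), hb'⟩
    have hef1 : e ≠ f1 := by
      intro h
      have : s(a,b) = s(a,a') := by rw [← he, h]
      exact ha'b (Sym2.congr_right.mp this).symm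
    have hef2 : e ≠ f2 := by
      intro h
      have : s(b,a) = s(b,b') := by rw [Sym2.eq_swap, ← he, h]
      exact hb'a (Sym2.congr_right.mp this).symm
    have hf12 : f1 ≠ f2 := by
      intro h
      have h' : s(a,a') = s(b,b') := Subtype.ext_iff.mp h
      rw [Sym2.eq_iff] at h'
      rcases h' with ⟨h1, _⟩ | ⟨_, h2'⟩
      · exact hadj.ne h1
      · exact ha'b h2'
    have hea : a ∈ (e : Sym2 V) := by rw [he]; exact Sym2.mem_mk_left _ _
    have heb : b ∈ (e : Sym2 V) := by rw [he]; exact Sym2.mem_mk_right _ _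
    exact ⟨f1, Finset.mem_univ _, f2, Finset.mem_univ _, hf12,
      line_adj hef1 hea (Sym2.mem_mk_left _ _), line_adj hef2 heb (Sym2.mem_mk_left _ _)⟩

end Cases

section PathC
variable {V : Type*} [Fintype V] [DecidableEq V] {G : SimpleGraph V} [DecidableRel G.Adj]



lemma deg_le_one_unique {v a b : V} (h : G.degree v ≤ 1) (ha : G.Adj v a) (hb : G.Adj v b) :
    a = b :=
  Finset.card_le_one.mp (by rwa [SimpleGraph.card_neighborFinset_eq_degree]) a
    ((G.mem_neighborFinset v a).mpr ha) b ((G.mem_neighborFinset v b).mpr hb)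

lemma deg_le_two_mem {v a b c : V} (h : G.degree v ≤ 2) (hab : a ≠ b)
    (ha : G.Adj v a) (hb : G.Adj v b) (hcadj : G.Adj v c) : c = a ∨ c = b := by
  have hsub : ({a, b} : Finset V) ⊆ G.neighborFinset v := by
    intro x hx
    rcases Finset.mem_insert.mp hx with rfl | hx
    · exact (G.mem_neighborFinset v x).mpr ha
    · rw [Finset.mem_singleton] at hx; subst hx
      exact (G.mem_neighborFinset v x).mpr hb
  have hcard : ({a, b} : Finset V).card = 2 := by
    rw [Finset.card_insert_of_notMem (by simpa using hab), Finset.card_singleton]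
  have heq : G.neighborFinset v = {a, b} :=
    (Finset.eq_of_subset_of_card_le hsub (by
      rw [hcard, SimpleGraph.card_neighborFinset_eq_degree]; exact h)).symm
  have := (G.mem_neighborFinset v c).mpr hcadj
  rw [heq] at this
  simpa using this

lemma path_iso_of_maxdeg_two (hc : G.Connected) (hdeg : ∀ v, G.degree v ≤ 2)
    (v0 : V) (h0 : G.degree v0 ≤ 1) :
    Nonempty (G ≃g SimpleGraph.pathGraph (Fintype.card V)) := by
  classical
  -- the greedy walk
  let g : ℕ → V × V := fun k => Nat.rec ((v0, v0) : V × V)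
    (fun _ p => (p.2, if h : ∃ w, G.Adj p.2 w ∧ w ≠ p.1 then h.choose else p.2)) k
  let f : ℕ → V := fun k => (g k).2
  have hgsucc : ∀ k, g (k+1) = ((g k).2,
      if h : ∃ w, G.Adj (g k).2 w ∧ w ≠ (g k).1 then h.choose else (g k).2) := fun k => rfl
  have hf0 : f 0 = v0 := rfl
  have hprev : ∀ k, (g k).1 = f (k - 1) := by
    intro k
    cases k with
    | zero => rfl
    | succ k => rfl
  set P : ℕ → Prop := fun k => ∃ w, G.Adj (f k) w ∧ w ≠ f (k - 1) with hP
  have hstep : ∀ k, P k → G.Adj (f k) (f (k+1)) ∧ f (k+1) ≠ f (k - 1) := by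
    intro k hk
    have hk' : ∃ w, G.Adj (g k).2 w ∧ w ≠ (g k).1 := by
      rw [hprev k]; exact hk
    have e : f (k+1) = hk'.choose := by
      show (g (k+1)).2 = _
      rw [hgsucc k]
      exact dif_pos hk'
    rw [e]
    have hsp := hk'.choose_spec
    refine ⟨hsp.1, ?_⟩
    rw [← hprev k]
    exact hsp.2
  -- the invariant
  have hInv : ∀ k, (∀ j, j < k → P j) →
      (∀ j, j < k → G.Adj (f j) (f (j+1))) ∧
      (∀ i ∈ Finset.Iic k, ∀ j ∈ Finset.Iic k, f i = f j → i = j) := by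
    intro k
    induction k with
    | zero =>
      intro _
      exact ⟨fun j hj => absurd hj (Nat.not_lt_zero j), by simp⟩
    | succ k ih =>
      intro hPs
      obtain ⟨ihadj, ihinj⟩ := ih (fun j hj => hPs j (hj.trans (Nat.lt_succ_self k)))
      have hPk : P k := hPs k (Nat.lt_succ_self k)
      obtain ⟨hadjk, hnek⟩ := hstep k hPk
      have hadj' : ∀ j, j < k + 1 → G.Adj (f j) (f (j+1)) := by
        intro j hj
        rcases Nat.lt_succ_iff_lt_or_eq.mp hj with h | rfl
        · exact ihadj j h
        · exact hadjk
      refine ⟨hadj', ?_⟩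
      -- injectivity: key case f (k+1) = f j with j ≤ k is impossible
      have hkey : ∀ j, j ≤ k → f (k+1) ≠ f j := by
        intro j hj heq
        rcases Nat.eq_or_lt_of_le hj with rfl | hjk
        · exact (G.ne_of_adj hadjk).symm heq
        · -- j < k
          have hadjkj : G.Adj (f j) (f k) := by
            rw [← heq]; exact hadjk.symm
          rcases Nat.eq_zero_or_pos j with rfl | hjpos
          · -- j = 0 : degree ≤ 1 vertex
            have h01 : G.Adj (f 0) (f 1) := hadj' 0 (by omega)
            have : f k = f 1 := deg_le_one_unique (hf0 ▸ h0) hadjkj h01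
            have hk1 : k = 1 := ihinj k (by simp) 1 (by simp; omega) this
            rw [heq, hk1] at hnek
            exact hnek rfl
          · -- 0 < j < k : interior vertex
            have hpm : G.Adj (f j) (f (j-1)) := by
              have := hadj' (j-1) (by omega)
              have e : j - 1 + 1 = j := by omega
              rw [e] at this
              exact this.symm
            have hpp : G.Adj (f j) (f (j+1)) := hadj' j (by omega)
            have hne : f (j-1) ≠ f (j+1) := by
              intro h
              have := ihinj (j-1) (by simp; omega) (j+1) (by simp; omega) h
              omega
            rcases deg_le_two_mem (hdeg (f j)) hne hpm hpp hadjkj with h | h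
            · have := ihinj k (by simp) (j-1) (by simp; omega) h
              omega
            · have hkj : k = j + 1 := ihinj k (by simp) (j+1) (by simp; omega) h
              rw [heq] at hnek
              apply hnek
              congr 1
              omega
      intro i hi j hj heq
      rw [Finset.mem_Iic] at hi hj
      rcases Nat.lt_succ_iff_lt_or_eq.mp (Nat.lt_succ_of_le hi) with hi' | rfl
      · rcases Nat.lt_succ_iff_lt_or_eq.mp (Nat.lt_succ_of_le hj) with hj' | rfl
        · exact ihinj i (by simp; omega) j (by simp; omega) heq
        · exact absurd heq.symm (hkey i (by omega))
      · rcases Nat.lt_succ_iff_lt_or_eq.mp (Nat.lt_succ_of_le hj) with hj' | rfl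
        · exact absurd heq (hkey j (by omega))
        · rfl
  -- existence of a stopping time
  have hex : ∃ k, ¬ P k := by
    by_contra hcon
    push_neg at hcon
    obtain ⟨-, hinj⟩ := hInv (Fintype.card V) (fun j _ => hcon j)
    have : (Finset.Iic (Fintype.card V)).card ≤ (Finset.univ : Finset V).card :=
      Finset.card_le_card_of_injOn f (fun _ _ => Finset.mem_univ _)
        (fun i hi j hj => hinj i hi j hj)
    rw [Nat.card_Iic, Finset.card_univ] at this
    omega
  set m := Nat.find hex with hm
  have hmspec : ¬ P m := Nat.find_spec hex
  have hmmin : ∀ j, j < m → P j := by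
    intro j hj
    have := Nat.find_min hex (show j < Nat.find hex by omega)
    exact not_not.mp this
  clear_value m
  obtain ⟨hadj, hinj⟩ := hInv m hmmin
  -- neighbor characterizations
  have hnbr0 : ∀ w, G.Adj (f 0) w → 0 < m ∧ w = f 1 := by
    intro w hw
    have hm0 : 0 < m := by
      rcases Nat.eq_zero_or_pos m with h | h
      · exfalso
        apply hmspec
        rw [h]
        exact ⟨w, hw, (G.ne_of_adj hw).symm⟩
      · exact h
    have h01 : G.Adj (f 0) (f 1) := (hstep 0 (hmmin 0 hm0)).1
    exact ⟨hm0, deg_le_one_unique (hf0 ▸ h0) hw h01⟩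
  have hnbrm : ∀ w, G.Adj (f m) w → w = f (m - 1) := by
    intro w hw
    by_contra h
    exact hmspec ⟨w, hw, h⟩
  have hnbrint : ∀ j, 0 < j → j < m → ∀ w, G.Adj (f j) w → w = f (j-1) ∨ w = f (j+1) := by
    intro j hj0 hjm w hw
    have hpm : G.Adj (f j) (f (j-1)) := by
      have := hadj (j-1) (by omega)
      have e : j - 1 + 1 = j := by omega
      rw [e] at this
      exact this.symm
    have hpp : G.Adj (f j) (f (j+1)) := hadj j hjm
    have hne : f (j-1) ≠ f (j+1) := by
      intro h
      have := hinj (j-1) (by simp; omega) (j+1) (by simp; omega) h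
      omega
    exact deg_le_two_mem (hdeg (f j)) hne hpm hpp hw
  -- surjectivity
  have hsurj : ∀ v : V, ∃ j ≤ m, f j = v := by
    intro v
    have hreach : G.Reachable v0 v := hc.preconnected v0 v
    obtain ⟨p⟩ := hreach
    have key : ∀ (a b : V) (q : G.Walk a b), (∃ j ≤ m, f j = a) → ∃ j ≤ m, f j = b := by
      intro a b q
      induction q with
      | nil => exact id
      | cons h q ih =>
        intro ⟨j, hjm, hfj⟩
        apply ih
        subst hfj
        rcases Nat.eq_zero_or_pos j with rfl | hj0
        · obtain ⟨hm0, hx⟩ := hnbr0 _ h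
          exact ⟨1, by omega, hx.symm⟩
        · rcases Nat.eq_or_lt_of_le hjm with hjm' | hjm'
          · rw [hjm'] at h
            exact ⟨m - 1, by omega, (hnbrm _ h).symm⟩
          · rcases hnbrint j hj0 hjm' _ h with h' | h'
            · exact ⟨j - 1, by omega, h'.symm⟩
            · exact ⟨j + 1, by omega, h'.symm⟩
    exact key v0 v p ⟨0, by omega, hf0⟩
  -- cardinality
  have hcard : Fintype.card V = m + 1 := by
    have hle : m + 1 ≤ Fintype.card V := by
      have : (Finset.Iic m).card ≤ (Finset.univ : Finset V).card :=
        Finset.card_le_card_of_injOn f (fun _ _ => Finset.mem_univ _)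
          (fun i hi j hj => hinj i hi j hj)
      rwa [Nat.card_Iic, Finset.card_univ] at this
    have hge : Fintype.card V ≤ m + 1 := by
      have : (Finset.univ : Finset V).card ≤ (Finset.Iic m).card := by
        apply Finset.card_le_card_of_surjOn f
        intro v _
        obtain ⟨j, hj, hfj⟩ := hsurj v
        exact ⟨j, by simpa using hj, hfj⟩
      rwa [Nat.card_Iic, Finset.card_univ] at this
    omega
  -- build the isomorphism
  have hbij : Function.Bijective (fun i : Fin (Fintype.card V) => f i.val) := by
    constructor
    · intro i j hij
      have hi : i.val ≤ m := by have := i.isLt; omega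
      have hj : j.val ≤ m := by have := j.isLt; omega
      exact Fin.ext (hinj i.val (by simpa using hi) j.val (by simpa using hj) hij)
    · intro v
      obtain ⟨j, hj, hfj⟩ := hsurj v
      exact ⟨⟨j, by omega⟩, hfj⟩
  refine ⟨(show SimpleGraph.pathGraph (Fintype.card V) ≃g G from ⟨Equiv.ofBijective _ hbij, ?_⟩).symm⟩
  intro i j
  simp only [Equiv.ofBijective_apply]
  constructor
  · -- G.Adj (f i) (f j) → pathGraph.Adj i j
    intro hadj'
    rw [SimpleGraph.pathGraph_adj]
    have hi : i.val ≤ m := by have := i.isLt; omega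
    have hj : j.val ≤ m := by have := j.isLt; omega
    rcases Nat.eq_zero_or_pos i.val with hi0 | hipos
    · obtain ⟨hm0, hx⟩ := hnbr0 (f j.val) (by rw [hi0] at hadj'; exact hadj')
      have : j.val = 1 := hinj j.val (by simpa using hj) 1 (by simp; omega) hx
      omega
    · rcases Nat.eq_or_lt_of_le hi with him | him
      · -- i.val = m
        have hx := hnbrm (f j.val) (by rw [him] at hadj'; exact hadj')
        have : j.val = m - 1 := hinj j.val (by simpa using hj) (m-1) (by simp) hx
        omega
      · rcases hnbrint i.val hipos him (f j.val) hadj' with h | h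
        · have : j.val = i.val - 1 := hinj j.val (by simpa using hj) (i.val - 1) (by simp; omega) h
          omega
        · have : j.val = i.val + 1 := hinj j.val (by simpa using hj) (i.val + 1) (by simp; omega) h
          omega
  · -- pathGraph.Adj i j → G.Adj (f i) (f j)
    intro hpij
    rw [SimpleGraph.pathGraph_adj] at hpij
    rcases hpij with h | h
    · have hj2 : (j : ℕ) < m + 1 := by rw [← hcard]; exact j.isLt
      have : i.val < m := by omega
      have := hadj i.val this
      have hij : i.val + 1 = j.val := by omega
      have e : f (i.val + 1) = f j.val := by rw [hij]
      rwa [e] at this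
    · have hi2 : (i : ℕ) < m + 1 := by rw [← hcard]; exact i.isLt
      have : j.val < m := by omega
      have := hadj j.val this
      have hji : j.val + 1 = i.val := by omega
      have e : f (j.val + 1) = f i.val := by rw [hji]
      rw [e] at this
      exact this.symm

end PathC

theorem stmt15 {V : Type*} [Fintype V] [DecidableEq V] (G : SimpleGraph V)
    [DecidableRel G.Adj] (hc : G.Connected) (α : ℝ) (hα : α ∈ Set.Ico (0:ℝ) 1)
    (hM : (Aalpha α (G.lineGraph)).IsHermitian) :
    (⨆ i, hM.eigenvalues i) < 2 ↔
      Nonempty (G ≃g SimpleGraph.pathGraph (Fintype.card V)) := by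
  classical
  have hge_of_S : ∀ S : Finset G.edgeSet, S.Nonempty → SProp G S →
      2 ≤ ⨆ i, hM.eigenvalues i := by
    intro S hSne hSp
    obtain ⟨e, he⟩ := hSne
    have hne : Nonempty G.edgeSet := ⟨e⟩
    obtain ⟨x, hx0, hxq⟩ := quad_ge hα G.lineGraph S ⟨e, he⟩ hSp
    have h2 := quad_le_iSup hM x
    have hxx := dot_self_pos hx0
    have h3 := le_trans hxq h2
    exact le_of_mul_le_mul_right (by linarith) hxx
  constructor
  · intro hsup
    by_cases h3 : ∃ v, 3 ≤ G.degree v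
    · exfalso
      obtain ⟨v, hv⟩ := h3
      obtain ⟨S, hSne, hSp⟩ := caseA v hv
      exact absurd (hge_of_S S hSne hSp) (not_le_of_gt hsup)
    · push_neg at h3
      by_cases h1 : ∃ v, G.degree v ≤ 1
      · obtain ⟨v0, hv0⟩ := h1
        exact path_iso_of_maxdeg_two hc (fun v => by have := h3 v; omega) v0 hv0
      · push_neg at h1
        exfalso
        obtain ⟨S, hSne, hSp⟩ := caseB hc (fun v => h1 v)
        exact absurd (hge_of_S S hSne hSp) (not_le_of_gt hsup)
  · rintro ⟨φ⟩
    have hstrict : ∀ x : G.edgeSet → ℝ, x ≠ 0 →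
        x ⬝ᵥ (Aalpha α G.lineGraph *ᵥ x) < 2 * (x ⬝ᵥ x) :=
      quad_strict hα G.lineGraph (eidx φ) (eidx_injective φ) (eidx_adj φ)
    have hall : ∀ i, hM.eigenvalues i < 2 := eig_lt_of_quad hM 2 hstrict
    cases isEmpty_or_nonempty G.edgeSet with
    | inl h => rw [Real.iSup_of_isEmpty]; norm_num
    | inr h =>
      obtain ⟨i0, hi0⟩ := Finite.exists_max hM.eigenvalues
      exact lt_of_le_of_lt (ciSup_le hi0) (hall i0)
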